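/- Let η : ℝ → ℂ be a C² function whose support is a compact subset of [0,∞) and which satisfies η(0) = 0, and let M > 0. There exists a constant C = C(η, M) such that for every x ≥ 0 and every C² function φ : [0,∞) → ℂ with |φ(λ)|, |φ'(λ)|, |φ''(λ)| ≤ M for all λ ≥ 0, one has ∫_ℝ | x ∫₀^∞ cos(uλ) e^{ixλ} η(λ) φ(λ) dλ | du ≤ C ⟨x⟩; indeed the pointwise bound | x ∫₀^∞ cos(uλ) e^{ixλ} η(λ) φ(λ) dλ | ≤ C x ( (1 + |x−u|)^{−2} + (1 + |x+u|)^{−2} ) holds uniformly in x ≥ 0 and u ∈ ℝ. -/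

import Mathlib

open MeasureTheory Complex Set

lemma hde (k : ℝ) (t : ℝ) :
    HasDerivAt (fun s : ℝ => Complex.exp (Complex.I * k * s)) (Complex.I * k * Complex.exp (Complex.I * k * t)) t := by
  have h1 : HasDerivAt (fun z : ℂ => Complex.exp (Complex.I * k * z)) (Complex.I * k * Complex.exp (Complex.I * k * t)) (t : ℂ) := by
    have := (Complex.hasDerivAt_exp (Complex.I * k * t)).comp (t : ℂ)
      ((hasDerivAt_id (t : ℂ)).const_mul (Complex.I * (k:ℂ)))
    simpa [Function.comp_def, mul_comm] using this
  exact h1.comp_ofReal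

-- IBP
lemma ibp (k R : ℝ) (w : ℝ → ℂ) (hw : ContDiff ℝ 1 w) :
    (Complex.I * k) * ∫ t in (0:ℝ)..R, Complex.exp (Complex.I * k * t) * w t
      = Complex.exp (Complex.I * k * R) * w R - w 0
        - ∫ t in (0:ℝ)..R, Complex.exp (Complex.I * k * t) * deriv w t := by
  have hw1 : Differentiable ℝ w := hw.differentiable one_ne_zero
  have hd : ∀ t ∈ Set.uIcc (0:ℝ) R, HasDerivAt w (deriv w t) t :=
    fun t _ => (hw1 t).hasDerivAt
  have he : ∀ t ∈ Set.uIcc (0:ℝ) R, HasDerivAt (fun s : ℝ => Complex.exp (Complex.I * k * s))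
      (Complex.I * k * Complex.exp (Complex.I * k * t)) t := fun t _ => hde k t
  have hw' : IntervalIntegrable (deriv w) volume 0 R :=
    (hw.continuous_deriv le_rfl).intervalIntegrable _ _
  have he' : IntervalIntegrable (fun t : ℝ => Complex.I * k * Complex.exp (Complex.I * k * t)) volume 0 R := by
    apply Continuous.intervalIntegrable
    exact continuous_const.mul ((Complex.continuous_exp.comp (by continuity)))
  have := intervalIntegral.integral_mul_deriv_eq_deriv_mul hd he hw' he'
  -- this : ∫ w * (I k e) = w R * e R - w 0 * e 0 - ∫ (w') * e
  rw [intervalIntegral.integral_congr (g := fun t => (Complex.I * k) * (Complex.exp (Complex.I * k * t) * w t)) (fun t _ => by ring)] at this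
  rw [intervalIntegral.integral_const_mul] at this
  rw [this, intervalIntegral.integral_congr
    (g := fun t => Complex.exp (Complex.I * k * t) * deriv w t) (fun t _ => mul_comm _ _)]
  simp only [Complex.ofReal_zero, mul_zero, Complex.exp_zero, mul_one]
  ring

lemma norm_e (k t : ℝ) : ‖Complex.exp (Complex.I * k * t)‖ = 1 := by
  rw [show Complex.I * k * t = ((k*t : ℝ):ℂ) * Complex.I by push_cast; ring]
  exact Complex.norm_exp_ofReal_mul_I _

lemma key_bound (g : ℝ → ℂ) (hg : ContDiff ℝ 2 g) (R : ℝ) (hR : 0 ≤ R)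
    (h0 : g 0 = 0) (hgR : g R = 0) (hg'R : deriv g R = 0)
    (B : ℝ) (hB1 : ‖deriv g 0‖ + (∫ t in (0:ℝ)..R, ‖deriv (deriv g) t‖) ≤ B)
    (hB2 : (∫ t in (0:ℝ)..R, ‖g t‖) ≤ B) (k : ℝ) :
    ‖∫ t in (0:ℝ)..R, Complex.exp (Complex.I * k * t) * g t‖ ≤ 4 * B * ((1 + |k|) ^ 2)⁻¹ := by
  set I₀ := ∫ t in (0:ℝ)..R, Complex.exp (Complex.I * k * t) * g t with hI₀
  have hg1 : ContDiff ℝ 1 g := hg.of_le (by norm_num)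
  have hg2 : ContDiff ℝ (1+1) g := by norm_num at hg ⊢; exact hg
  have hg'1 : ContDiff ℝ 1 (deriv g) := (contDiff_succ_iff_deriv.mp hg2).2.2
  have e1 := ibp k R g hg1
  have e2 := ibp k R (deriv g) hg'1
  rw [h0, hgR] at e1
  rw [hg'R] at e2
  have key : (Complex.I * k) ^ 2 * I₀
      = deriv g 0 + ∫ t in (0:ℝ)..R, Complex.exp (Complex.I * k * t) * deriv (deriv g) t := by
    rw [hI₀]; linear_combination (Complex.I * (k:ℂ)) * e1 - e2
  have hn1 : ‖I₀‖ ≤ B := by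
    calc ‖I₀‖ ≤ ∫ t in (0:ℝ)..R, ‖Complex.exp (Complex.I * k * t) * g t‖ :=
          intervalIntegral.norm_integral_le_integral_norm hR
      _ = ∫ t in (0:ℝ)..R, ‖g t‖ :=
          intervalIntegral.integral_congr (fun t _ => by rw [norm_mul, norm_e, one_mul])
      _ ≤ B := hB2
  have hn2 : k ^ 2 * ‖I₀‖ ≤ B := by
    have h1 : ‖(Complex.I * k) ^ 2 * I₀‖ = k ^ 2 * ‖I₀‖ := by
      rw [norm_mul, norm_pow, norm_mul, Complex.norm_I, one_mul, Complex.norm_real,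
        Real.norm_eq_abs, _root_.sq_abs]
    rw [← h1, key]
    calc ‖deriv g 0 + ∫ t in (0:ℝ)..R, Complex.exp (Complex.I * k * t) * deriv (deriv g) t‖
        ≤ ‖deriv g 0‖ + ‖∫ t in (0:ℝ)..R, Complex.exp (Complex.I * k * t) * deriv (deriv g) t‖ :=
          norm_add_le _ _
      _ ≤ ‖deriv g 0‖ + ∫ t in (0:ℝ)..R, ‖Complex.exp (Complex.I * k * t) * deriv (deriv g) t‖ := by
          gcongr; exact intervalIntegral.norm_integral_le_integral_norm hR
      _ = ‖deriv g 0‖ + ∫ t in (0:ℝ)..R, ‖deriv (deriv g) t‖ := by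
          rw [intervalIntegral.integral_congr (fun t _ => by rw [norm_mul, norm_e, one_mul])]
      _ ≤ B := hB1
  have hB0 : (0:ℝ) ≤ B := le_trans (norm_nonneg I₀) hn1
  have hmain : ‖I₀‖ * (1 + |k|) ^ 2 ≤ 4 * B := by
    nlinarith [abs_nonneg k, norm_nonneg I₀, sq_nonneg (|k| - 1), _root_.sq_abs k]
  have hp : (0:ℝ) < (1 + |k|) ^ 2 := by positivity
  calc ‖I₀‖ = ‖I₀‖ * (1 + |k|) ^ 2 * ((1 + |k|) ^ 2)⁻¹ := by field_simp
    _ ≤ 4 * B * ((1 + |k|) ^ 2)⁻¹ := by gcongr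

lemma ioi_eq_interval (R : ℝ) (hR : 0 < R) (F : ℝ → ℂ) (hF : ∀ t, R ≤ t → F t = 0) :
    ∫ t in Set.Ioi (0:ℝ), F t = ∫ t in (0:ℝ)..R, F t := by
  rw [intervalIntegral.integral_of_le hR.le]
  have h1 : ∫ t in Set.Ioi (0:ℝ), F t = ∫ t in Set.Ioi (0:ℝ), (Set.Ioc (0:ℝ) R).indicator F t := by
    refine setIntegral_congr_fun measurableSet_Ioi (fun t ht => ?_)
    by_cases h : t ≤ R
    · rw [Set.indicator_of_mem (Set.mem_Ioc.mpr ⟨ht, h⟩)]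
    · rw [Set.indicator_of_notMem (fun hm => h hm.2), hF t (le_of_not_ge h)]
  rw [h1, setIntegral_indicator measurableSet_Ioc,
    show Set.Ioi (0:ℝ) ∩ Set.Ioc 0 R = Set.Ioc 0 R by
      rw [Set.inter_eq_right]; exact fun t ht => ht.1]

lemma integrable_base : Integrable (fun u : ℝ => ((1 + |u|) ^ 2)⁻¹) := by
  refine Integrable.mono' integrable_inv_one_add_sq ?_ ?_
  · exact (Continuous.inv₀ (by continuity) (fun u => by positivity)).aestronglyMeasurable
  · refine Filter.Eventually.of_forall (fun u => ?_)
    rw [Real.norm_eq_abs, _root_.abs_of_nonneg (by positivity)]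
    apply inv_anti₀ (by positivity)
    nlinarith [abs_nonneg u, _root_.sq_abs u]

lemma integral_base : ∫ u : ℝ, ((1 + |u|) ^ 2)⁻¹ = 2 := by
  have h0 : ∫ t in Set.Ioi (1:ℝ), ((t:ℝ) ^ 2)⁻¹ = 1 := by
    have := integral_Ioi_rpow_of_lt (by norm_num : (-2:ℝ) < -1) (by norm_num : (0:ℝ) < 1)
    rw [setIntegral_congr_fun measurableSet_Ioi
      (fun t (ht : 1 < t) => by
        rw [Real.rpow_neg (by linarith), show ((2:ℝ):ℝ) = ((2:ℕ):ℝ) by norm_num,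
          Real.rpow_natCast])] at this
    · rw [this]; norm_num
  have hmp : MeasurePreserving (fun x : ℝ => x + 1) volume volume :=
    measurePreserving_add_right volume 1
  have hpre : (fun x : ℝ => x + 1) ⁻¹' Set.Ioi (1:ℝ) = Set.Ioi 0 := by
    ext t; simp [lt_add_iff_pos_left]
  have h1 : ∫ t in Set.Ioi (0:ℝ), ((1 + t) ^ 2)⁻¹ = 1 := by
    have := hmp.setIntegral_preimage_emb (measurableEmbedding_addRight 1)
      (fun x : ℝ => ((x:ℝ) ^ 2)⁻¹) (Set.Ioi 1)
    rw [hpre] at this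
    calc ∫ t in Set.Ioi (0:ℝ), ((1 + t) ^ 2)⁻¹
        = ∫ t in Set.Ioi (0:ℝ), ((t + 1) ^ 2)⁻¹ :=
          setIntegral_congr_fun measurableSet_Ioi (fun t _ => by rw [add_comm])
      _ = ∫ y in Set.Ioi (1:ℝ), ((y:ℝ) ^ 2)⁻¹ := this
      _ = 1 := h0
  rw [integral_comp_abs (f := fun t => ((1 + t) ^ 2)⁻¹), h1]; norm_num

/-- with `η` a `C²` function compactly supported in `[0,∞)` with `η(0) = 0`,
and `φ` a `C²` function with `φ, φ', φ''` bounded by `M` on `[0,∞)`, there is `C = C(η, M)`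
such that for all `x ≥ 0`: the pointwise bound
`|x ∫₀^∞ cos(uλ) e^{ixλ} η(λ) φ(λ) dλ| ≤ C x ((1+|x-u|)⁻² + (1+|x+u|)⁻²)` holds for all `u`,
and consequently `∫ |x ∫₀^∞ cos(uλ) e^{ixλ} η(λ) φ(λ) dλ| du ≤ C ⟨x⟩`. -/
theorem stmt_11 (η : ℝ → ℂ) (hη : ContDiff ℝ 2 η) (hηc : HasCompactSupport η)
    (hηsupp : Function.support η ⊆ Set.Ici (0 : ℝ)) (hη0 : η 0 = 0) (M : ℝ) (hM : 0 < M) :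
    ∃ C : ℝ, ∀ x : ℝ, 0 ≤ x → ∀ φ : ℝ → ℂ, ContDiff ℝ 2 φ →
      (∀ lam : ℝ, 0 ≤ lam →
        ‖φ lam‖ ≤ M ∧ ‖deriv φ lam‖ ≤ M ∧ ‖deriv (deriv φ) lam‖ ≤ M) →
      (∀ u : ℝ,
        ‖(x : ℂ) * ∫ lam in Set.Ioi (0 : ℝ),
            ((Real.cos (u * lam) : ℝ) : ℂ) * Complex.exp (Complex.I * (x : ℂ) * (lam : ℂ)) *
              η lam * φ lam‖
          ≤ C * x * (((1 + |x - u|) ^ 2)⁻¹ + ((1 + |x + u|) ^ 2)⁻¹)) ∧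
      (∫ u : ℝ,
          ‖(x : ℂ) * ∫ lam in Set.Ioi (0 : ℝ),
              ((Real.cos (u * lam) : ℝ) : ℂ) * Complex.exp (Complex.I * (x : ℂ) * (lam : ℂ)) *
                η lam * φ lam‖)
        ≤ C * Real.sqrt (1 + x ^ 2) := by
  classical
  -- choose R beyond the support of η
  obtain ⟨r, hr⟩ := (Metric.isBounded_iff_subset_closedBall 0).mp hηc.isBounded
  set R : ℝ := max r 0 + 1 with hRdef
  have hR : 0 < R := by positivity
  have hout : ∀ t, R ≤ t → t ∉ tsupport η := by
    intro t ht hmem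
    have := hr hmem
    rw [Real.closedBall_eq_Icc] at this
    have h2 := this.2
    have : r ≤ max r 0 := le_max_left _ _
    linarith
  have hη_out : ∀ t, R ≤ t → η t = 0 := fun t ht => image_eq_zero_of_notMem_tsupport (hout t ht)
  have hη'_out : ∀ t, R ≤ t → deriv η t = 0 := by
    intro t ht
    by_contra h
    exact hout t ht (support_deriv_subset (by exact h))
  -- constants
  set K1 : ℝ := ∫ t in (0:ℝ)..R, (‖η t‖ + 2 * ‖deriv η t‖ + ‖deriv (deriv η) t‖) with hK1def
  set B : ℝ := M * (‖deriv η 0‖ + K1) with hBdef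
  set C : ℝ := 8 * B with hCdef
  -- differentiability facts for η
  have hη2 : ContDiff ℝ (1+1) η := by norm_num at hη ⊢; exact hη
  have hη1 : ContDiff ℝ 1 η := hη.of_le (by norm_num)
  have hηd : Differentiable ℝ η := hη1.differentiable one_ne_zero
  have hη'1 : ContDiff ℝ 1 (deriv η) := (contDiff_succ_iff_deriv.mp hη2).2.2
  have hη'd : Differentiable ℝ (deriv η) := hη'1.differentiable one_ne_zero
  have hη''c : Continuous (deriv (deriv η)) := hη'1.continuous_deriv le_rfl
  have hK1nonneg : 0 ≤ K1 := by
    rw [hK1def]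
    apply intervalIntegral.integral_nonneg hR.le
    intro t _; positivity
  have hB0 : 0 ≤ B := by rw [hBdef]; positivity
  have hC0 : 0 ≤ C := by rw [hCdef]; positivity
  refine ⟨C, fun x hx φ hφ hφb => ?_⟩
  -- the function g and its derivatives
  set g : ℝ → ℂ := fun t => η t * φ t with hgdef
  have hφ2 : ContDiff ℝ (1+1) φ := by norm_num at hφ ⊢; exact hφ
  have hφ1 : ContDiff ℝ 1 φ := hφ.of_le (by norm_num)
  have hφd : Differentiable ℝ φ := hφ1.differentiable one_ne_zero
  have hφ'1 : ContDiff ℝ 1 (deriv φ) := (contDiff_succ_iff_deriv.mp hφ2).2.2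
  have hφ'd : Differentiable ℝ (deriv φ) := hφ'1.differentiable one_ne_zero
  have hg : ContDiff ℝ 2 g := hη.mul hφ
  have hdg : deriv g = fun t => deriv η t * φ t + η t * deriv φ t :=
    funext fun t => deriv_mul (hηd t) (hφd t)
  have hdg2 : ∀ t, deriv (deriv g) t
      = (deriv (deriv η) t * φ t + deriv η t * deriv φ t)
        + (deriv η t * deriv φ t + η t * deriv (deriv φ) t) := by
    intro t
    rw [hdg]
    rw [deriv_fun_add (f := fun y => deriv η y * φ y) (g := fun y => η y * deriv φ y) ((hη'd t).mul (hφd t)) ((hηd t).mul (hφ'd t)),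
      deriv_fun_mul (hη'd t) (hφd t), deriv_fun_mul (hηd t) (hφ'd t)]
  -- boundary values
  have hg0 : g 0 = 0 := by rw [hgdef]; simp [hη0]
  have hgR : g R = 0 := by rw [hgdef]; simp [hη_out R le_rfl]
  have hg'R : deriv g R = 0 := by
    rw [hdg]; simp [hη_out R le_rfl, hη'_out R le_rfl]
  -- the bounds hB1, hB2
  have hcontg'' : Continuous (deriv (deriv g)) := by
    have : ContDiff ℝ (1+1) g := by norm_num at hg ⊢; exact hg
    exact ((contDiff_succ_iff_deriv.mp this).2.2).continuous_deriv le_rfl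
  have hcontbound : Continuous fun t : ℝ =>
      M * (‖η t‖ + 2 * ‖deriv η t‖ + ‖deriv (deriv η) t‖) :=
    continuous_const.mul (((hη.continuous.norm).add
      (continuous_const.mul (hη'1.continuous.norm))).add hη''c.norm)
  have hB1 : ‖deriv g 0‖ + (∫ t in (0:ℝ)..R, ‖deriv (deriv g) t‖) ≤ B := by
    have h1 : ‖deriv g 0‖ ≤ M * ‖deriv η 0‖ := by
      have hd0 : deriv g 0 = deriv η 0 * φ 0 := by rw [hdg]; simp [hη0]
      rw [hd0, norm_mul]
      calc ‖deriv η 0‖ * ‖φ 0‖ ≤ ‖deriv η 0‖ * M := by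
            gcongr; exact (hφb 0 le_rfl).1
        _ = M * ‖deriv η 0‖ := mul_comm _ _
    have h2 : (∫ t in (0:ℝ)..R, ‖deriv (deriv g) t‖)
        ≤ ∫ t in (0:ℝ)..R, M * (‖η t‖ + 2 * ‖deriv η t‖ + ‖deriv (deriv η) t‖) := by
      apply intervalIntegral.integral_mono_on hR.le
      · exact (hcontg''.norm).intervalIntegrable _ _
      · exact hcontbound.intervalIntegrable _ _
      · intro t ht
        have ht0 : (0:ℝ) ≤ t := ht.1
        obtain ⟨hb0, hb1, hb2⟩ := hφb t ht0
        rw [hdg2 t]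
        calc ‖(deriv (deriv η) t * φ t + deriv η t * deriv φ t)
              + (deriv η t * deriv φ t + η t * deriv (deriv φ) t)‖
            ≤ ‖deriv (deriv η) t‖ * ‖φ t‖ + ‖deriv η t‖ * ‖deriv φ t‖
              + (‖deriv η t‖ * ‖deriv φ t‖ + ‖η t‖ * ‖deriv (deriv φ) t‖) := by
              refine le_trans (norm_add_le _ _) ?_
              gcongr <;> first
                | exact le_trans (norm_add_le _ _) (by rw [norm_mul, norm_mul])
                | skip
          _ ≤ ‖deriv (deriv η) t‖ * M + ‖deriv η t‖ * M + (‖deriv η t‖ * M + ‖η t‖ * M) := by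
              gcongr <;> first | exact norm_nonneg _ | assumption
          _ = M * (‖η t‖ + 2 * ‖deriv η t‖ + ‖deriv (deriv η) t‖) := by ring
    rw [intervalIntegral.integral_const_mul, ← hK1def] at h2
    rw [hBdef]
    nlinarith [h1, h2]
  have hB2 : (∫ t in (0:ℝ)..R, ‖g t‖) ≤ B := by
    have h2 : (∫ t in (0:ℝ)..R, ‖g t‖)
        ≤ ∫ t in (0:ℝ)..R, M * (‖η t‖ + 2 * ‖deriv η t‖ + ‖deriv (deriv η) t‖) := by
      apply intervalIntegral.integral_mono_on hR.le
      · exact (hg.continuous.norm).intervalIntegrable _ _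
      · exact hcontbound.intervalIntegrable _ _
      · intro t ht
        obtain ⟨hb0, _, _⟩ := hφb t ht.1
        calc ‖g t‖ = ‖η t‖ * ‖φ t‖ := norm_mul _ _
          _ ≤ ‖η t‖ * M := mul_le_mul_of_nonneg_left hb0 (norm_nonneg _)
          _ ≤ M * (‖η t‖ + 2 * ‖deriv η t‖ + ‖deriv (deriv η) t‖) := by
              nlinarith [norm_nonneg (deriv η t), norm_nonneg (deriv (deriv η) t), norm_nonneg (η t)]
    rw [intervalIntegral.integral_const_mul, ← hK1def] at h2
    rw [hBdef]
    nlinarith [mul_nonneg hM.le (norm_nonneg (deriv η 0))]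
  -- key oscillatory bound
  set Ik : ℝ → ℂ := fun k => ∫ t in (0:ℝ)..R, Complex.exp (Complex.I * k * t) * g t with hIkdef
  have hIk : ∀ k : ℝ, ‖Ik k‖ ≤ 4 * B * ((1 + |k|) ^ 2)⁻¹ :=
    fun k => key_bound g hg R hR.le hg0 hgR hg'R B hB1 hB2 k
  -- representation of the inner integral
  have hrepr : ∀ u : ℝ, (∫ t in Set.Ioi (0:ℝ),
      ((Real.cos (u * t) : ℝ) : ℂ) * Complex.exp (Complex.I * (x:ℂ) * (t:ℂ)) * η t * φ t)
      = (Ik (x + u) + Ik (x - u)) / 2 := by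
    intro u
    have hzero : ∀ t, R ≤ t →
        ((Real.cos (u * t) : ℝ) : ℂ) * Complex.exp (Complex.I * (x:ℂ) * (t:ℂ)) * η t * φ t = 0 :=
      fun t ht => by rw [hη_out t ht]; ring
    rw [ioi_eq_interval R hR _ hzero]
    have hsplit : ∀ t : ℝ,
        ((Real.cos (u * t) : ℝ) : ℂ) * Complex.exp (Complex.I * (x:ℂ) * (t:ℂ)) * η t * φ t
        = (Complex.exp (Complex.I * ((x + u):ℝ) * t) * g t
            + Complex.exp (Complex.I * ((x - u):ℝ) * t) * g t) / 2 := by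
      intro t
      have e1 : Complex.exp (((u * t : ℝ) : ℂ) * Complex.I) * Complex.exp (Complex.I * (x:ℂ) * (t:ℂ))
          = Complex.exp (Complex.I * ((x + u):ℝ) * t) := by
        rw [← Complex.exp_add]; congr 1; push_cast; ring
      have e2 : Complex.exp (-((u * t : ℝ) : ℂ) * Complex.I) * Complex.exp (Complex.I * (x:ℂ) * (t:ℂ))
          = Complex.exp (Complex.I * ((x - u):ℝ) * t) := by
        rw [← Complex.exp_add]; congr 1; push_cast; ring
      calc ((Real.cos (u * t) : ℝ) : ℂ) * Complex.exp (Complex.I * (x:ℂ) * (t:ℂ)) * η t * φ t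
          = (Complex.exp (((u * t : ℝ) : ℂ) * Complex.I) * Complex.exp (Complex.I * (x:ℂ) * (t:ℂ)) * (η t * φ t)
            + Complex.exp (-((u * t : ℝ) : ℂ) * Complex.I) * Complex.exp (Complex.I * (x:ℂ) * (t:ℂ)) * (η t * φ t)) / 2 := by
            rw [Complex.ofReal_cos]
            simp only [Complex.cos]
            ring
        _ = (Complex.exp (Complex.I * ((x + u):ℝ) * t) * g t
            + Complex.exp (Complex.I * ((x - u):ℝ) * t) * g t) / 2 := by
            rw [e1, e2]
    rw [intervalIntegral.integral_congr (fun t _ => hsplit t)]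
    have hi1 : IntervalIntegrable (fun t : ℝ => Complex.exp (Complex.I * ((x + u):ℝ) * t) * g t) volume 0 R := by
      apply Continuous.intervalIntegrable
      exact (Complex.continuous_exp.comp (continuous_const.mul Complex.continuous_ofReal)).mul hg.continuous
    have hi2 : IntervalIntegrable (fun t : ℝ => Complex.exp (Complex.I * ((x - u):ℝ) * t) * g t) volume 0 R := by
      apply Continuous.intervalIntegrable
      exact (Complex.continuous_exp.comp (continuous_const.mul Complex.continuous_ofReal)).mul hg.continuous
    rw [intervalIntegral.integral_div, intervalIntegral.integral_add hi1 hi2]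
  -- main pointwise estimate
  have hptw : ∀ u : ℝ,
      ‖(x : ℂ) * ∫ t in Set.Ioi (0:ℝ),
        ((Real.cos (u * t) : ℝ) : ℂ) * Complex.exp (Complex.I * (x:ℂ) * (t:ℂ)) * η t * φ t‖
      ≤ 2 * B * x * (((1 + |x - u|) ^ 2)⁻¹ + ((1 + |x + u|) ^ 2)⁻¹) := by
    intro u
    rw [hrepr u, norm_mul, Complex.norm_real, Real.norm_eq_abs, _root_.abs_of_nonneg hx]
    have h1 : ‖(Ik (x + u) + Ik (x - u)) / 2‖
        ≤ 2 * B * (((1 + |x - u|) ^ 2)⁻¹ + ((1 + |x + u|) ^ 2)⁻¹) := by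
      calc ‖(Ik (x + u) + Ik (x - u)) / 2‖ = ‖Ik (x + u) + Ik (x - u)‖ / 2 := by
            rw [norm_div]; norm_num
        _ ≤ (‖Ik (x + u)‖ + ‖Ik (x - u)‖) / 2 := by gcongr; exact norm_add_le _ _
        _ ≤ (4 * B * ((1 + |x + u|) ^ 2)⁻¹ + 4 * B * ((1 + |x - u|) ^ 2)⁻¹) / 2 := by
            gcongr <;> [exact hIk (x + u); exact hIk (x - u)]
        _ = 2 * B * (((1 + |x - u|) ^ 2)⁻¹ + ((1 + |x + u|) ^ 2)⁻¹) := by ring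
    calc x * ‖(Ik (x + u) + Ik (x - u)) / 2‖
        ≤ x * (2 * B * (((1 + |x - u|) ^ 2)⁻¹ + ((1 + |x + u|) ^ 2)⁻¹)) := by gcongr
      _ = 2 * B * x * (((1 + |x - u|) ^ 2)⁻¹ + ((1 + |x + u|) ^ 2)⁻¹) := by ring
  constructor
  · intro u
    refine le_trans (hptw u) ?_
    have hs : (0:ℝ) ≤ ((1 + |x - u|) ^ 2)⁻¹ + ((1 + |x + u|) ^ 2)⁻¹ := by positivity
    rw [hCdef]
    nlinarith [mul_nonneg (mul_nonneg hB0 hx) hs]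
  · -- the integral bound
    have hp_int : Integrable (fun u : ℝ => ((1 + |x - u|) ^ 2)⁻¹) := by
      have he : (fun u : ℝ => ((1 + |x - u|) ^ 2)⁻¹) = fun u : ℝ => ((1 + |u - x|) ^ 2)⁻¹ :=
        funext fun u => by rw [abs_sub_comm]
      rw [he]
      exact integrable_base.comp_sub_right x
    have hq_int : Integrable (fun u : ℝ => ((1 + |x + u|) ^ 2)⁻¹) := by
      have he : (fun u : ℝ => ((1 + |x + u|) ^ 2)⁻¹) = fun u : ℝ => ((1 + |u + x|) ^ 2)⁻¹ :=
        funext fun u => by rw [add_comm x u]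
      rw [he]
      exact integrable_base.comp_add_right x
    have hp_val : ∫ u : ℝ, ((1 + |x - u|) ^ 2)⁻¹ = 2 := by
      have he : (fun u : ℝ => ((1 + |x - u|) ^ 2)⁻¹) = fun u : ℝ => ((1 + |u - x|) ^ 2)⁻¹ :=
        funext fun u => by rw [abs_sub_comm]
      rw [he]
      exact (integral_sub_right_eq_self (fun u : ℝ => ((1 + |u|) ^ 2)⁻¹) x).trans integral_base
    have hq_val : ∫ u : ℝ, ((1 + |x + u|) ^ 2)⁻¹ = 2 := by
      have he : (fun u : ℝ => ((1 + |x + u|) ^ 2)⁻¹) = fun u : ℝ => ((1 + |u + x|) ^ 2)⁻¹ :=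
        funext fun u => by rw [add_comm x u]
      rw [he]
      exact (integral_add_right_eq_self (fun u : ℝ => ((1 + |u|) ^ 2)⁻¹) x).trans integral_base
    have hbound_int : Integrable
        (fun u : ℝ => 2 * B * x * (((1 + |x - u|) ^ 2)⁻¹ + ((1 + |x + u|) ^ 2)⁻¹)) :=
      (hp_int.add hq_int).const_mul _
    -- continuity of Ik
    have hIkcont : Continuous Ik := by
      have heq : Ik = fun k : ℝ => ∫ t, (Complex.exp (Complex.I * k * t) * g t)
          ∂(volume.restrict (Set.Ioc 0 R)) :=
        funext fun k => intervalIntegral.integral_of_le hR.le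
      rw [heq]
      refine continuous_of_dominated (bound := fun t => ‖g t‖) ?_ ?_ ?_ ?_
      · intro k
        exact ((Complex.continuous_exp.comp
          (continuous_const.mul Complex.continuous_ofReal)).mul hg.continuous).aestronglyMeasurable
      · intro k
        exact Filter.Eventually.of_forall fun t => le_of_eq (by rw [norm_mul, norm_e, one_mul])
      · exact hg.continuous.norm.integrableOn_Ioc
      · refine Filter.Eventually.of_forall fun t => ?_
        exact (Complex.continuous_exp.comp
          ((continuous_const.mul Complex.continuous_ofReal).mul continuous_const)).mul
          continuous_const
    have hFeq : (fun u : ℝ => ‖(x : ℂ) * ∫ t in Set.Ioi (0:ℝ),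
        ((Real.cos (u * t) : ℝ) : ℂ) * Complex.exp (Complex.I * (x:ℂ) * (t:ℂ)) * η t * φ t‖)
        = fun u : ℝ => ‖(x : ℂ) * ((Ik (x + u) + Ik (x - u)) / 2)‖ :=
      funext fun u => by rw [hrepr u]
    have hFcont : Continuous fun u : ℝ => ‖(x : ℂ) * ((Ik (x + u) + Ik (x - u)) / 2)‖ :=
      (continuous_const.mul (((hIkcont.comp (continuous_const.add continuous_id)).add
        (hIkcont.comp (continuous_const.sub continuous_id))).div_const 2)).norm
    have hF_int : Integrable (fun u : ℝ => ‖(x : ℂ) * ∫ t in Set.Ioi (0:ℝ),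
        ((Real.cos (u * t) : ℝ) : ℂ) * Complex.exp (Complex.I * (x:ℂ) * (t:ℂ)) * η t * φ t‖) := by
      rw [hFeq]
      refine hbound_int.mono' hFcont.aestronglyMeasurable ?_
      refine Filter.Eventually.of_forall fun u => ?_
      rw [Real.norm_eq_abs, _root_.abs_of_nonneg (norm_nonneg _), ← hrepr u]
      exact hptw u
    have hxsqrt : x ≤ Real.sqrt (1 + x ^ 2) := by
      rw [show x = Real.sqrt (x ^ 2) by rw [Real.sqrt_sq hx]]
      apply Real.sqrt_le_sqrt
      nlinarith [Real.sq_sqrt (by positivity : (0:ℝ) ≤ x ^ 2), Real.sqrt_nonneg (x ^ 2)]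
    calc (∫ u : ℝ, ‖(x : ℂ) * ∫ t in Set.Ioi (0:ℝ),
          ((Real.cos (u * t) : ℝ) : ℂ) * Complex.exp (Complex.I * (x:ℂ) * (t:ℂ)) * η t * φ t‖)
        ≤ ∫ u : ℝ, 2 * B * x * (((1 + |x - u|) ^ 2)⁻¹ + ((1 + |x + u|) ^ 2)⁻¹) :=
          integral_mono hF_int hbound_int hptw
      _ = 2 * B * x * ∫ u : ℝ, (((1 + |x - u|) ^ 2)⁻¹ + ((1 + |x + u|) ^ 2)⁻¹) :=
          integral_const_mul _ _
      _ = 2 * B * x * (2 + 2) := by rw [integral_add hp_int hq_int, hp_val, hq_val]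
      _ = C * x := by rw [hCdef]; ring
      _ ≤ C * Real.sqrt (1 + x ^ 2) := by gcongr
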